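/- Under the abstract variational framework, let γ₁, γ₂ : X → ℝ be bounded measurable with γ₁ ≥ c₁ μ-a.e. for some constant c₁ > 0 and γ₂ ≥ 0 μ-a.e., let ℓ : V → ℝ be a linear functional, and let u₁, u₂ ∈ V be weak solutions for (γ₁, ℓ) and (γ₂, ℓ) respectively. Then ℓ(u₂) − ℓ(u₁) ≥ ∫_X (γ₂ − γ₂²/γ₁)·(Tu₂)² dμ. (This is the second inequality of the monotonicity estimate, Lemma 4.1: ∫_{∂Ω} g (Λ(γ₂) − Λ(γ₁)) g ds ≥ ∫_Γ (γ₂ − γ₂²/γ₁) u₂² ds.) -/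

import Mathlib

open MeasureTheory

/-- Second inequality of the monotonicity estimate (Lemma 4.1):
`ℓ(u₂) − ℓ(u₁) ≥ ∫_X (γ₂ − γ₂²/γ₁)(Tu₂)² dμ`. -/
theorem monotonicity_estimate_second
    {V : Type*} [AddCommGroup V] [Module ℝ V]
    {X : Type*} [MeasurableSpace X] {μ : Measure X}
    (a : V → V → ℝ)
    (ha_symm : ∀ v w, a v w = a w v)
    (ha_add : ∀ u v w, a (u + v) w = a u w + a v w)
    (ha_smul : ∀ (c : ℝ) (v w : V), a (c • v) w = c * a v w)
    (ha_nonneg : ∀ v, 0 ≤ a v v)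
    (T : V →ₗ[ℝ] (X → ℝ))
    (hT : ∀ v, MemLp (T v) 2 μ)
    (γ₁ γ₂ : X → ℝ)
    (hγ₁m : Measurable γ₁) (hγ₂m : Measurable γ₂)
    (hγ₁b : ∃ C, ∀ x, |γ₁ x| ≤ C) (hγ₂b : ∃ C, ∀ x, |γ₂ x| ≤ C)
    (c₁ : ℝ) (hc₁ : 0 < c₁)
    (hγ₁lb : ∀ᵐ x ∂μ, c₁ ≤ γ₁ x)
    (hγ₂0 : ∀ᵐ x ∂μ, 0 ≤ γ₂ x)
    (ℓ : V →ₗ[ℝ] ℝ)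
    (u₁ u₂ : V)
    (hu₁ : ∀ w, a u₁ w + ∫ x, γ₁ x * T u₁ x * T w x ∂μ = ℓ w)
    (hu₂ : ∀ w, a u₂ w + ∫ x, γ₂ x * T u₂ x * T w x ∂μ = ℓ w) :
    ℓ u₂ - ℓ u₁ ≥ ∫ x, (γ₂ x - (γ₂ x) ^ 2 / γ₁ x) * (T u₂ x) ^ 2 ∂μ := by
  -- products of L² functions are integrable
  have hmul : ∀ v w : V, Integrable (fun x => T v x * T w x) μ := by
    intro v w
    have h := ((hT w).smul (hT v) (r := 1) (hpqr := ⟨by rw [ENNReal.inv_two_add_inv_two, inv_one]⟩))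
    rw [memLp_one_iff_integrable] at h
    exact h
  have hint : ∀ (γ : X → ℝ), Measurable γ → (∃ C, ∀ x, |γ x| ≤ C) →
      ∀ v w : V, Integrable (fun x => γ x * T v x * T w x) μ := by
    rintro γ hm ⟨C, hC⟩ v w
    have h := (hmul v w).bdd_mul hm.aestronglyMeasurable (ae_of_all _ fun x => by simpa using hC x)
    simpa [mul_assoc] using h
  have I11 := hint γ₁ hγ₁m hγ₁b u₁ u₁
  have I22 := hint γ₂ hγ₂m hγ₂b u₂ u₂
  have I21 := hint γ₂ hγ₂m hγ₂b u₂ u₁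
  -- weak solution identities
  have e1 : ℓ u₂ = a u₂ u₂ + ∫ x, γ₂ x * T u₂ x * T u₂ x ∂μ := (hu₂ u₂).symm
  have e2 : ℓ u₁ = a u₂ u₁ + ∫ x, γ₂ x * T u₂ x * T u₁ x ∂μ := (hu₂ u₁).symm
  have e3 : ℓ u₁ = a u₁ u₁ + ∫ x, γ₁ x * T u₁ x * T u₁ x ∂μ := (hu₁ u₁).symm
  -- nonnegativity of a(u₂-u₁, u₂-u₁), expanded
  have hsub : ∀ v w z : V, a (v - w) z = a v z - a w z := by
    intro v w z
    have h1 := ha_add v ((-1 : ℝ) • w) z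
    have h2 := ha_smul (-1) w z
    have : v - w = v + (-1 : ℝ) • w := by
      simp [sub_eq_add_neg]
    rw [this, h1, h2]; ring
  have had : 0 ≤ a u₂ u₂ - 2 * a u₂ u₁ + a u₁ u₁ := by
    have h := ha_nonneg (u₂ - u₁)
    have e : a (u₂ - u₁) (u₂ - u₁) = a u₂ u₂ - 2 * a u₂ u₁ + a u₁ u₁ := by
      rw [hsub, ha_symm u₂ (u₂ - u₁), ha_symm u₁ (u₂ - u₁), hsub, hsub,
        ha_symm u₁ u₂]
      ring
    linarith [e ▸ h]
  -- combine the three integrals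
  set Q : X → ℝ := fun x =>
    γ₂ x * T u₂ x * T u₂ x - 2 * (γ₂ x * T u₂ x * T u₁ x) + γ₁ x * T u₁ x * T u₁ x
    with hQ
  have hQint : Integrable Q μ := by
    exact (I22.sub (I21.const_mul 2)).add I11
  have hQeq : ∫ x, Q x ∂μ =
      (∫ x, γ₂ x * T u₂ x * T u₂ x ∂μ) - 2 * (∫ x, γ₂ x * T u₂ x * T u₁ x ∂μ)
        + ∫ x, γ₁ x * T u₁ x * T u₁ x ∂μ := by
    have h1 : Integrable
        (fun x => γ₂ x * T u₂ x * T u₂ x - 2 * (γ₂ x * T u₂ x * T u₁ x)) μ :=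
      I22.sub (I21.const_mul 2)
    simp only [hQ]
    rw [integral_add h1 I11, integral_sub I22 (I21.const_mul 2), integral_const_mul]
  have key : ℓ u₂ - ℓ u₁ = (a u₂ u₂ - 2 * a u₂ u₁ + a u₁ u₁) + ∫ x, Q x ∂μ := by
    rw [hQeq]
    have : ℓ u₂ - ℓ u₁ = ℓ u₂ - 2 * ℓ u₁ + ℓ u₁ := by ring
    rw [this]
    nth_rewrite 1 [e1]; nth_rewrite 1 [e2]; nth_rewrite 1 [e3]
    ring
  -- integrability of the target integrand
  obtain ⟨C₂', hC₂'⟩ := hγ₂b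
  set C₂ : ℝ := max C₂' 0 with hC₂def
  have hC₂ : ∀ x, |γ₂ x| ≤ C₂ := fun x => (hC₂' x).trans (le_max_left _ _)
  have hC₂0 : 0 ≤ C₂ := le_max_right _ _
  set g : X → ℝ := fun x => (γ₂ x - (γ₂ x) ^ 2 / γ₁ x) * (T u₂ x) ^ 2 with hg
  have hgm : AEStronglyMeasurable g μ := by
    exact ((hγ₂m.sub ((hγ₂m.pow_const 2).div hγ₁m)).aestronglyMeasurable.mul
      ((hT u₂).aestronglyMeasurable.pow 2))
  have hgint : Integrable g μ := by
    refine Integrable.mono' ((hmul u₂ u₂).const_mul (C₂ + C₂ ^ 2 / c₁)) hgm ?_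
    filter_upwards [hγ₁lb] with x h1
    have hγ₁pos : 0 < γ₁ x := lt_of_lt_of_le hc₁ h1
    have hb : |γ₂ x - (γ₂ x) ^ 2 / γ₁ x| ≤ C₂ + C₂ ^ 2 / c₁ := by
      refine (abs_sub _ _).trans (add_le_add (hC₂ x) ?_)
      rw [abs_div, abs_of_pos hγ₁pos]
      have h2 : |(γ₂ x) ^ 2| ≤ C₂ ^ 2 := by
        rw [abs_pow]
        exact pow_le_pow_left₀ (abs_nonneg _) (hC₂ x) 2
      exact div_le_div₀ (by positivity) h2 hc₁ h1
    calc ‖g x‖ = |γ₂ x - (γ₂ x) ^ 2 / γ₁ x| * (T u₂ x) ^ 2 := by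
          rw [hg, Real.norm_eq_abs, abs_mul, abs_pow, sq_abs]
      _ ≤ (C₂ + C₂ ^ 2 / c₁) * (T u₂ x) ^ 2 :=
          mul_le_mul_of_nonneg_right hb (sq_nonneg _)
      _ = (C₂ + C₂ ^ 2 / c₁) * (T u₂ x * T u₂ x) := by ring
  -- pointwise a.e. inequality g ≤ Q
  have hptwise : ∀ᵐ x ∂μ, g x ≤ Q x := by
    filter_upwards [hγ₁lb, hγ₂0] with x h1 h2
    have hγ₁pos : 0 < γ₁ x := lt_of_lt_of_le hc₁ h1
    rw [hg, hQ, ← sub_nonneg]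
    have e : γ₂ x * T u₂ x * T u₂ x - 2 * (γ₂ x * T u₂ x * T u₁ x)
        + γ₁ x * T u₁ x * T u₁ x - (γ₂ x - (γ₂ x) ^ 2 / γ₁ x) * (T u₂ x) ^ 2
        = (γ₁ x * T u₁ x - γ₂ x * T u₂ x) ^ 2 / γ₁ x := by
      field_simp
      ring
    rw [e]
    positivity
  have hint_le : ∫ x, g x ∂μ ≤ ∫ x, Q x ∂μ := integral_mono_ae hgint hQint hptwise
  calc ∫ x, (γ₂ x - (γ₂ x) ^ 2 / γ₁ x) * (T u₂ x) ^ 2 ∂μ = ∫ x, g x ∂μ := rfl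
    _ ≤ ∫ x, Q x ∂μ := hint_le
    _ ≤ (a u₂ u₂ - 2 * a u₂ u₁ + a u₁ u₁) + ∫ x, Q x ∂μ := by linarith
    _ = ℓ u₂ - ℓ u₁ := key.symm
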